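/- arXiv:2407.04783 — 2 statements merged into one kernel-verified Lean document; each statement's English description precedes it below -/
import Mathlib

section
/- There is an absolute constant c > 0 with the following property. Let X be a measurable space, F a nonempty finite family of probability measures on X, α, β ∈ (0,1), and n an integer with n ≥ c·(log|F| + log(1/β))/α². Then there exists a measurable function T : X^n → F such that for every probability measure g on X, g^{⊗n}( { S ∈ X^n : dtv(T(S), g) ≤ 3·dtv(g, F) + α } ) ≥ 1 − β. -/
open MeasureTheory ProbabilityTheory Matrix

/-- Total variation distance between two measures. -/
noncomputable def tvDist {X : Type*} [MeasurableSpace X] (μ ν : Measure X) : ℝ :=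
  ⨆ E : {E : Set X // MeasurableSet E}, |(μ E.1).toReal - (ν E.1).toReal|

/-- Total variation distance from a measure to a family of measures. -/
noncomputable def tvDistSet {X : Type*} [MeasurableSpace X] (g : Measure X)
    (F : Set (Measure X)) : ℝ :=
  ⨅ f : F, tvDist g f.1

/-- A `(C, α)`-accurate `(m, ρ, L)`-stable list decoder for `F`. -/
def IsStableListDecoder {X : Type*} [MeasurableSpace X] (F : Set (Measure X))
    (C α : ℝ) (m : ℕ) (ρ : ℝ) (L : ℝ)
    (A : (Fin m → X) → Set (Measure X)) : Prop :=
  (∀ S, (A S).Finite ∧ ((A S).ncard : ℝ) ≤ L ∧ ∀ μ ∈ A S, IsProbabilityMeasure μ) ∧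
  (∀ g : Measure X, IsProbabilityMeasure g →
    ∃ gt : Measure X, IsProbabilityMeasure gt ∧
      MeasurableSet {S : Fin m → X | gt ∈ A S} ∧
      ENNReal.ofReal ρ ≤ Measure.pi (fun _ : Fin m => g) {S | gt ∈ A S} ∧
      tvDist gt g ≤ α + C * tvDistSet g F)

instance {X : Type*} [MeasurableSpace X] : MeasurableSpace (ProbabilityMeasure X) :=
  inferInstanceAs (MeasurableSpace {μ : Measure X // IsProbabilityMeasure μ})

/-- `(ε, δ)`-differential privacy of a kernel on datasets of size `n`. -/
def IsDPKernel {X Y : Type*} [MeasurableSpace X] [MeasurableSpace Y] {n : ℕ}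
    (M : Kernel (Fin n → X) Y) (ε δ : ℝ) : Prop :=
  ∀ D D' : Fin n → X, (∃ i, D i ≠ D' i ∧ ∀ j, j ≠ i → D j = D' j) →
    ∀ E : Set Y, MeasurableSet E →
      M D E ≤ ENNReal.ofReal (Real.exp ε) * M D' E + ENNReal.ofReal δ

/-- `F` is `(ε,δ)`-privately `C`-agnostic `(n,α,β)`-learnable. -/
def PrivAgnosticLearnable {X : Type*} [MeasurableSpace X] (F : Set (Measure X))
    (ε δ C : ℝ) (n : ℕ) (α β : ℝ) : Prop :=
  ∃ M : Kernel (Fin n → X) (ProbabilityMeasure X), IsMarkovKernel M ∧ IsDPKernel M ε δ ∧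
    ∀ g : Measure X, IsProbabilityMeasure g →
      ENNReal.ofReal (1 - β) ≤
        ∫⁻ S, M S {f : ProbabilityMeasure X | tvDist (f : Measure X) g ≤ C * tvDistSet g F + α}
          ∂(Measure.pi fun _ : Fin n => g)

/-- The class of `k`-mixtures of `F`. -/
noncomputable def kmix {X : Type*} [MeasurableSpace X] (k : ℕ) (F : Set (Measure X)) :
    Set (Measure X) :=
  {ν | ∃ (w : Fin k → ℝ) (f : Fin k → Measure X),
    (∀ i, 0 ≤ w i) ∧ (∑ i, w i = 1) ∧ (∀ i, f i ∈ F) ∧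
    ν = ∑ i, ENNReal.ofReal (w i) • f i}

/-- Density of the `d`-dimensional Gaussian with mean `μ` and covariance `S`. -/
noncomputable def gaussianPdf (d : ℕ) (μ : Fin d → ℝ) (S : Matrix (Fin d) (Fin d) ℝ)
    (x : Fin d → ℝ) : ℝ :=
  (Real.sqrt ((2 * Real.pi) ^ d * S.det))⁻¹ *
    Real.exp (-(1 / 2) * ((x - μ) ⬝ᵥ (S⁻¹ *ᵥ (x - μ))))

/-- The family of `d`-dimensional Gaussian measures. -/
noncomputable def Gd (d : ℕ) : Set (Measure (Fin d → ℝ)) :=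
  {ν | ∃ (μ : Fin d → ℝ) (S : Matrix (Fin d) (Fin d) ℝ), S.PosDef ∧
    ν = volume.withDensity fun x => ENNReal.ofReal (gaussianPdf d μ S x)}

open Real in
set_option linter.unusedSectionVars false
section TV
variable {X : Type*} [MeasurableSpace X] (μ ν κ : Measure X)
  [IsProbabilityMeasure μ] [IsProbabilityMeasure ν] [IsProbabilityMeasure κ]

lemma toReal_prob_le_one {E : Set X} : (μ E).toReal ≤ 1 := by
  have := prob_le_one (μ := μ) (s := E)
  simpa using ENNReal.toReal_mono (by simp) this

lemma tv_bdd : BddAbove (Set.range fun E : {E : Set X // MeasurableSet E} =>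
    |(μ E.1).toReal - (ν E.1).toReal|) := by
  refine ⟨2, ?_⟩
  rintro x ⟨E, rfl⟩
  have h1 := toReal_prob_le_one μ (E := E.1)
  have h2 := toReal_prob_le_one ν (E := E.1)
  have h3 : (0:ℝ) ≤ (μ E.1).toReal := ENNReal.toReal_nonneg
  have h4 : (0:ℝ) ≤ (ν E.1).toReal := ENNReal.toReal_nonneg
  rw [abs_le]; constructor <;> linarith

lemma tv_le {E : Set X} (hE : MeasurableSet E) :
    |(μ E).toReal - (ν E).toReal| ≤ tvDist μ ν :=
  le_ciSup (tv_bdd μ ν) ⟨E, hE⟩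

lemma tv_nonneg : 0 ≤ tvDist μ ν := by
  have := tv_le μ ν MeasurableSet.empty
  have h := abs_nonneg ((μ ∅).toReal - (ν ∅).toReal)
  linarith

lemma tv_comm : tvDist μ ν = tvDist ν μ := by
  unfold tvDist
  congr 1; funext E; rw [abs_sub_comm]

lemma tv_triangle : tvDist μ ν ≤ tvDist μ κ + tvDist κ ν := by
  refine ciSup_le fun E => ?_
  calc |(μ E.1).toReal - (ν E.1).toReal|
      ≤ |(μ E.1).toReal - (κ E.1).toReal| + |(κ E.1).toReal - (ν E.1).toReal| :=
        abs_sub_le _ _ _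
    _ ≤ tvDist μ κ + tvDist κ ν := add_le_add (tv_le μ κ E.2) (tv_le κ ν E.2)

lemma tv_exists_set {η : ℝ} (hη : 0 < η) :
    ∃ E : Set X, MeasurableSet E ∧
      tvDist μ ν - η < |(μ E).toReal - (ν E).toReal| := by
  obtain ⟨E, hE⟩ := exists_lt_of_lt_ciSup (f := fun E : {E : Set X // MeasurableSet E} =>
    |(μ E.1).toReal - (ν E.1).toReal|) (sub_lt_self _ hη)
  exact ⟨E.1, E.2, hE⟩

end TV

lemma key_ineq {u p : ℝ} (hu : |u| ≤ 1) (hp0 : 0 ≤ p) (hp1 : p ≤ 1) :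
    Real.exp (u * (1 - p)) * p + Real.exp (u * (0 - p)) * (1 - p) ≤ Real.exp (u ^ 2) := by
  have h1 : Real.exp (u * (1 - p)) = Real.exp u * Real.exp (-(u * p)) := by
    rw [← Real.exp_add]; ring_nf
  have h2 : Real.exp (u * (0 - p)) = Real.exp (-(u * p)) := by ring_nf
  have h3 : 1 - p + p * Real.exp u ≤ Real.exp (p * (Real.exp u - 1)) := by
    have := Real.add_one_le_exp (p * (Real.exp u - 1))
    linarith
  have h4 : Real.exp u - 1 - u ≤ u ^ 2 := by
    have hb := Real.exp_bound hu (n := 2) (by norm_num)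
    rw [show (Finset.range 2) = {0, 1} by rfl] at hb
    simp [Finset.sum_insert, Finset.mem_singleton] at hb
    have h5 : |u| ^ 2 = u ^ 2 := sq_abs u
    have := abs_le.mp hb
    nlinarith
  have h5 : 0 ≤ Real.exp u - 1 - u := by
    have := Real.add_one_le_exp u; linarith
  have h6 : p * (Real.exp u - 1 - u) ≤ u ^ 2 := by nlinarith
  calc Real.exp (u * (1 - p)) * p + Real.exp (u * (0 - p)) * (1 - p)
      = Real.exp (-(u * p)) * (1 - p + p * Real.exp u) := by rw [h1, h2]; ring
    _ ≤ Real.exp (-(u * p)) * Real.exp (p * (Real.exp u - 1)) :=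
        mul_le_mul_of_nonneg_left h3 (Real.exp_pos _).le
    _ = Real.exp (p * (Real.exp u - 1 - u)) := by rw [← Real.exp_add]; ring_nf
    _ ≤ Real.exp (u ^ 2) := Real.exp_le_exp.2 h6

open Real in
lemma chernoff_aux {X : Type} [MeasurableSpace X] (g : Measure X) [IsProbabilityMeasure g]
    {A : Set X} (hA : MeasurableSet A) (n : ℕ) (u a : ℝ) (hu : |u| ≤ 1) :
    Measure.pi (fun _ : Fin n => g)
      {S | a ≤ ∑ i, u * (A.indicator (fun _ => (1:ℝ)) (S i) - (g A).toReal)} ≤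
      ENNReal.ofReal (Real.exp (n * u ^ 2 - a)) := by
  classical
  set p : ℝ := (g A).toReal with hpdef
  have hp0 : 0 ≤ p := ENNReal.toReal_nonneg
  have hp1 : p ≤ 1 := by
    have := prob_le_one (μ := g) (s := A)
    simpa [hpdef] using ENNReal.toReal_mono (by simp) this
  set h : X → ℝ := A.indicator (fun _ => (1:ℝ)) with hhdef
  have hhm : Measurable h := measurable_const.indicator hA
  have hh01 : ∀ x, h x = 0 ∨ h x = 1 := by
    intro x; by_cases hx : x ∈ A <;> simp [hhdef, hx]
  set ψ : X → ℝ := fun x => Real.exp (u * (h x - p)) with hψdef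
  have hψm : Measurable ψ := (Real.measurable_exp.comp ((hhm.sub measurable_const).const_mul u))
  have hψle : ∀ x, ψ x ≤ Real.exp 1 := by
    intro x
    apply Real.exp_le_exp.2
    have hb : |h x - p| ≤ 1 := by
      rcases hh01 x with hx | hx <;> rw [hx, abs_le] <;> constructor <;> linarith
    calc u * (h x - p) ≤ |u * (h x - p)| := le_abs_self _
      _ = |u| * |h x - p| := abs_mul _ _
      _ ≤ 1 * 1 := mul_le_mul hu hb (abs_nonneg _) zero_le_one
      _ = 1 := one_mul 1
  have hψpos : ∀ x, 0 < ψ x := fun x => Real.exp_pos _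
  -- per-coordinate integral
  have hψeq : ψ = fun x => A.indicator (fun _ => Real.exp (u * (1 - p))) x
      + Aᶜ.indicator (fun _ => Real.exp (u * (0 - p))) x := by
    funext x
    by_cases hx : x ∈ A <;> simp [hψdef, hhdef, hx]
  have hcompl : (g Aᶜ).toReal = 1 - p := by
    rw [prob_compl_eq_one_sub hA, ENNReal.toReal_sub_of_le prob_le_one ENNReal.one_ne_top]
    simp
    exact hpdef.symm
  have hint : ∫ x, ψ x ∂g = Real.exp (u * (1 - p)) * p + Real.exp (u * (0 - p)) * (1 - p) := by
    rw [hψeq, integral_add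
      ((integrable_const _).indicator hA)
      ((integrable_const _).indicator hA.compl),
      integral_indicator_const _ hA, integral_indicator_const _ hA.compl]
    simp [hcompl, mul_comm]
    simp only [measureReal_def, hcompl]
    rw [← hpdef]
  have hkey : ∫ x, ψ x ∂g ≤ Real.exp (u ^ 2) := by
    rw [hint]; exact key_ineq hu hp0 hp1
  have hintnn : 0 ≤ ∫ x, ψ x ∂g := integral_nonneg fun x => (hψpos x).le
  -- product structure
  letI : MeasureSpace X := ⟨g⟩
  haveI : SigmaFinite (volume : Measure X) := by
    show SigmaFinite g; infer_instance
  have hvol : Measure.pi (fun _ : Fin n => g) = (volume : Measure (Fin n → X)) := by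
    rw [MeasureTheory.volume_pi]
    rfl
  have hprod : ∫ S : Fin n → X, ∏ i, ψ (S i) ∂(Measure.pi (fun _ : Fin n => g))
      = (∫ x, ψ x ∂g) ^ n := by
    rw [hvol]
    rw [← hvol]; simpa using MeasureTheory.integral_fintype_prod_eq_pow (ι := Fin n) (μ := g) ψ
  set Z : (Fin n → X) → ℝ := fun S => ∑ i, u * (h (S i) - p) with hZdef
  have hexpZ : ∀ S, Real.exp (1 * Z S) = ∏ i, ψ (S i) := by
    intro S
    rw [one_mul, hZdef, Real.exp_sum]
  have hZm : Measurable Z := by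
    apply Finset.measurable_sum
    intro i _
    exact ((hhm.comp (measurable_pi_apply i)).sub measurable_const).const_mul u
  haveI : IsProbabilityMeasure (Measure.pi (fun _ : Fin n => g)) := by infer_instance
  have hintg : Integrable (fun S => Real.exp (1 * Z S)) (Measure.pi (fun _ : Fin n => g)) := by
    apply Integrable.mono' (integrable_const (Real.exp 1 ^ n))
    · exact ((Real.measurable_exp.comp (hZm.const_mul 1)).aestronglyMeasurable)
    · refine Filter.Eventually.of_forall fun S => ?_
      rw [Real.norm_eq_abs, abs_of_pos (Real.exp_pos _), hexpZ]
      calc ∏ i, ψ (S i) ≤ ∏ _i : Fin n, Real.exp 1 := by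
            apply Finset.prod_le_prod (fun i _ => (hψpos _).le) (fun i _ => hψle _)
        _ = Real.exp 1 ^ n := by simp
  have hmgf : mgf Z (Measure.pi (fun _ : Fin n => g)) 1 = (∫ x, ψ x ∂g) ^ n := by
    rw [mgf, ← hprod]
    exact integral_congr_ae (Filter.Eventually.of_forall fun S => hexpZ S)
  have hmain := measure_ge_le_exp_mul_mgf (X := Z) (μ := Measure.pi (fun _ : Fin n => g))
    a zero_le_one hintg
  rw [hmgf] at hmain
  have hb : Real.exp (-1 * a) * (∫ x, ψ x ∂g) ^ n ≤ Real.exp (↑n * u ^ 2 - a) := by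
    calc Real.exp (-1 * a) * (∫ x, ψ x ∂g) ^ n
        ≤ Real.exp (-1 * a) * Real.exp (u ^ 2) ^ n := by
          apply mul_le_mul_of_nonneg_left _ (Real.exp_pos _).le
          exact pow_le_pow_left₀ hintnn hkey n
      _ = Real.exp (↑n * u ^ 2 - a) := by
          rw [← Real.exp_nat_mul, ← Real.exp_add]; ring_nf
  rw [ENNReal.le_ofReal_iff_toReal_le (measure_ne_top _ _) (Real.exp_pos _).le]
  exact le_trans hmain hb


set_option maxHeartbeats 1000000 in
theorem statement14 :
    ∃ c : ℝ, 0 < c ∧ ∀ (X : Type) (_ : MeasurableSpace X) (F : Set (Measure X)),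
      F.Nonempty → F.Finite → (∀ f ∈ F, IsProbabilityMeasure f) →
      ∀ α β : ℝ, α ∈ Set.Ioo (0 : ℝ) 1 → β ∈ Set.Ioo (0 : ℝ) 1 →
      ∀ n : ℕ, c * (Real.log F.ncard + Real.log (1 / β)) / α ^ 2 ≤ n →
      ∃ T : (Fin n → X) → Measure X,
        (∀ S, T S ∈ F) ∧ (∀ μ : Measure X, MeasurableSet {S | T S = μ}) ∧
        ∀ g : Measure X, IsProbabilityMeasure g →
          ENNReal.ofReal (1 - β) ≤
            Measure.pi (fun _ : Fin n => g) {S | tvDist (T S) g ≤ 3 * tvDistSet g F + α} := by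
  classical
  refine ⟨200, by norm_num, ?_⟩
  intro X mX F hFne hFfin hFprob α β hα hβ n hn
  obtain ⟨hα0, hα1⟩ := hα
  obtain ⟨hβ0, hβ1⟩ := hβ
  have hβinv : 0 < Real.log (1 / β) := Real.log_pos (by rw [lt_div_iff₀ hβ0]; linarith)
  haveI := hFfin.fintype
  haveI : Nonempty F := hFne.to_subtype
  have hNpos : 0 < F.ncard := (Set.ncard_pos hFfin).mpr hFne
  by_cases hN1 : F.ncard = 1
  · -- singleton case
    obtain ⟨f, hf⟩ := Set.ncard_eq_one.mp hN1
    subst hf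
    haveI : IsProbabilityMeasure f := hFprob f rfl
    refine ⟨fun _ => f, fun _ => rfl, ?_, ?_⟩
    · intro μ
      by_cases h : f = μ
      · have : {S : Fin n → X | f = μ} = Set.univ := by ext S; simp [h]
        rw [this]; exact MeasurableSet.univ
      · have : {S : Fin n → X | f = μ} = ∅ := by ext S; simp [h]
        rw [this]; exact MeasurableSet.empty
    · intro g hg
      have h1 : tvDistSet g {f} = tvDist g f := by
        rw [tvDistSet, ciInf_unique]
        rfl
      have hset : {S : Fin n → X | tvDist f g ≤ 3 * tvDistSet g {f} + α} = Set.univ := by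
        rw [Set.eq_univ_iff_forall]
        intro S
        have h2 := tv_nonneg g f
        have h3 : tvDist f g = tvDist g f := tv_comm f g
        simp only [Set.mem_setOf_eq, h1]
        linarith
      rw [hset]
      simp only [measure_univ]
      exact ENNReal.ofReal_le_one.2 (by linarith)
  · -- general case
    have hN2 : 2 ≤ F.ncard := by omega
    have hcardF : Fintype.card F = F.ncard := by
      rw [← Nat.card_coe_set_eq F, Nat.card_eq_fintype_card]
    set N := F.ncard with hNdef
    have e : Fin N ≃ F := (Fintype.equivFinOfCardEq hcardF).symm
    set κ : Fin N → Measure X := fun k => (e k : Measure X) with hκdef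
    have hκF : ∀ k, κ k ∈ F := fun k => (e k).2
    haveI hκP : ∀ k, IsProbabilityMeasure (κ k) := fun k => hFprob _ (hκF k)
    haveI : Nonempty (Fin N) := ⟨⟨0, by omega⟩⟩
    -- n is positive
    have hNR : (2:ℝ) ≤ (N:ℝ) := by exact_mod_cast hN2
    have hlog2 : (0:ℝ) < Real.log 2 := Real.log_pos (by norm_num)
    have hlogN2 : Real.log 2 ≤ Real.log N := Real.log_le_log (by norm_num) hNR
    have hnpos : 0 < n := by
      by_contra hcon
      have hn0 : n = 0 := by omega
      rw [hn0] at hn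
      have hpos : (0:ℝ) < 200 * (Real.log N + Real.log (1 / β)) / α ^ 2 := by
        apply div_pos (by nlinarith) (by positivity)
      rw [hNdef] at hpos
      simp only [Nat.cast_zero] at hn
      linarith
    -- Yatracos sets
    have hAex : ∀ k l : Fin N, ∃ E : Set X, MeasurableSet E ∧
        tvDist (κ k) (κ l) - α / 8 < |((κ k) E).toReal - ((κ l) E).toReal| :=
      fun k l => tv_exists_set (κ k) (κ l) (by linarith)
    choose A hAm hAy using hAex
    -- empirical measure
    set emp : Set X → (Fin n → X) → ℝ :=
      fun B S => (n:ℝ)⁻¹ * ∑ i, B.indicator (fun _ => (1:ℝ)) (S i) with hempdef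
    have hempM : ∀ (B : Set X), MeasurableSet B → Measurable (emp B) := by
      intro B hB
      apply Measurable.const_mul
      apply Finset.measurable_sum
      intro i _
      exact (measurable_const.indicator hB).comp (measurable_pi_apply i)
    -- discrepancy
    set D : Fin N → (Fin n → X) → ℝ := fun k S =>
      Finset.univ.sup' Finset.univ_nonempty
        (fun pl : Fin N × Fin N => |((κ k) (A pl.1 pl.2)).toReal - emp (A pl.1 pl.2) S|)
      with hDdef
    have hDm : ∀ k, Measurable (D k) := by
      intro k
      have hDeq : D k = Finset.univ.sup' Finset.univ_nonempty
          (fun pl : Fin N × Fin N =>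
            fun S => |((κ k) (A pl.1 pl.2)).toReal - emp (A pl.1 pl.2) S|) := by
        funext S
        rw [Finset.sup'_apply, hDdef]
      rw [hDeq]
      exact Finset.measurable_sup' _ fun pl _ => ((hempM _ (hAm pl.1 pl.2)).const_sub _).abs
    have hDle : ∀ k S (pl : Fin N × Fin N),
        |((κ k) (A pl.1 pl.2)).toReal - emp (A pl.1 pl.2) S| ≤ D k S := by
      intro k S pl
      have := Finset.le_sup' (fun pl : Fin N × Fin N =>
        |((κ k) (A pl.1 pl.2)).toReal - emp (A pl.1 pl.2) S|) (Finset.mem_univ pl)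
      exact this
    have hDub : ∀ (k : Fin N) (S) (g : Measure X), IsProbabilityMeasure g →
        (∀ k' l' : Fin N, |emp (A k' l') S - (g (A k' l')).toReal| ≤ α / 4) →
        D k S ≤ tvDist (κ k) g + α / 4 := by
      intro k S g hg hgood
      simp only [hDdef]
      apply Finset.sup'_le
      intro pl _
      have h2 : |(g (A pl.1 pl.2)).toReal - emp (A pl.1 pl.2) S| ≤ α / 4 := by
        rw [abs_sub_comm]; exact hgood pl.1 pl.2
      calc |((κ k) (A pl.1 pl.2)).toReal - emp (A pl.1 pl.2) S|
          ≤ |((κ k) (A pl.1 pl.2)).toReal - (g (A pl.1 pl.2)).toReal|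
            + |(g (A pl.1 pl.2)).toReal - emp (A pl.1 pl.2) S| := abs_sub_le _ _ _
        _ ≤ tvDist (κ k) g + α / 4 := add_le_add (tv_le _ _ (hAm _ _)) h2
    -- minimizer
    have hmin : ∀ S : Fin n → X, ∃ k, ∀ j, D k S ≤ D j S := by
      intro S
      obtain ⟨k, -, hk⟩ := Finset.exists_min_image Finset.univ (fun k => D k S)
        ⟨Classical.arbitrary _, Finset.mem_univ _⟩
      exact ⟨k, fun j => hk j (Finset.mem_univ j)⟩
    set ms : (Fin n → X) → Finset (Fin N) :=
      fun S => Finset.univ.filter (fun k => ∀ j, D k S ≤ D j S) with hmsdef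
    have hmsne : ∀ S, (ms S).Nonempty := by
      intro S; obtain ⟨k, hk⟩ := hmin S
      exact ⟨k, by simp [hmsdef, hk]⟩
    set idx : (Fin n → X) → Fin N := fun S => (ms S).min' (hmsne S) with hidxdef
    have hidx_min : ∀ S j, D (idx S) S ≤ D j S := by
      intro S
      have := (ms S).min'_mem (hmsne S)
      simp only [hmsdef, Finset.mem_filter, Finset.mem_univ, true_and] at this
      exact this
    have hidx_meas : ∀ k, MeasurableSet {S | idx S = k} := by
      intro k
      have heq : {S | idx S = k} = ({S | ∀ j, D k S ≤ D j S} ∩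
          ⋂ (j : Fin N) (_ : j < k), {S | ∀ j', D j S ≤ D j' S}ᶜ) := by
        ext S
        simp only [Set.mem_inter_iff, Set.mem_iInter, Set.mem_compl_iff, Set.mem_setOf_eq]
        constructor
        · rintro rfl
          refine ⟨hidx_min S, fun j hj hcon => ?_⟩
          have hjm : j ∈ ms S := by
            simp only [hmsdef, Finset.mem_filter, Finset.mem_univ, true_and]; exact hcon
          exact absurd ((ms S).min'_le j hjm) (not_le.mpr hj)
        · rintro ⟨h1, h2⟩
          have hk : k ∈ ms S := by
            simp only [hmsdef, Finset.mem_filter, Finset.mem_univ, true_and]; exact h1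
          have hle := (ms S).min'_le k hk
          rcases lt_or_eq_of_le hle with hlt | heq
          · exact absurd (hidx_min S) (h2 _ hlt)
          · exact heq
      rw [heq]
      apply MeasurableSet.inter
      · have h3 : {S | ∀ j, D k S ≤ D j S} = ⋂ j, {S | D k S ≤ D j S} := by ext S; simp
        rw [h3]; exact MeasurableSet.iInter fun j => measurableSet_le (hDm k) (hDm j)
      · apply MeasurableSet.iInter; intro j; apply MeasurableSet.iInter; intro _
        apply MeasurableSet.compl
        have h3 : {S | ∀ j', D j S ≤ D j' S} = ⋂ j', {S | D j S ≤ D j' S} := by ext S; simp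
        rw [h3]; exact MeasurableSet.iInter fun j' => measurableSet_le (hDm j) (hDm j')
    refine ⟨fun S => κ (idx S), fun S => hκF _, ?_, ?_⟩
    · intro μ
      have heq : {S | κ (idx S) = μ} = ⋃ (k : Fin N) (_ : κ k = μ), {S | idx S = k} := by
        ext S
        simp only [Set.mem_setOf_eq, Set.mem_iUnion]
        constructor
        · intro h; exact ⟨idx S, h, rfl⟩
        · rintro ⟨k, hk, hSk⟩; rw [hSk]; exact hk
      rw [heq]
      exact MeasurableSet.iUnion fun k => MeasurableSet.iUnion fun _ => hidx_meas k
    · intro g hg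
      haveI : IsProbabilityMeasure g := hg
      set opt := tvDistSet g F with hoptdef
      obtain ⟨fs, hfs⟩ : ∃ fs : F, tvDist g (fs : Measure X) < opt + α / 8 := by
        apply exists_lt_of_ciInf_lt
        exact lt_add_of_pos_right _ (by linarith)
      set l : Fin N := e.symm fs with hldef
      have hκl : κ l = (fs : Measure X) := by rw [hκdef]; simp [hldef]
      set ebd := ENNReal.ofReal (Real.exp (-((n:ℝ) * α ^ 2 / 64))) with hebddef
      -- tail bound for a single set
      have htail : ∀ (B : Set X), MeasurableSet B →
          (Measure.pi fun _ : Fin n => g) {S | α/4 ≤ |emp B S - (g B).toReal|} ≤ ebd + ebd := by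
        intro B hB
        have hnR : (0:ℝ) < n := by exact_mod_cast hnpos
        have hsplit : {S : Fin n → X | α/4 ≤ |emp B S - (g B).toReal|} ⊆
            {S | α/4 ≤ emp B S - (g B).toReal} ∪ {S | α/4 ≤ (g B).toReal - emp B S} := by
          intro S hS
          simp only [Set.mem_setOf_eq] at hS
          rcases abs_cases (emp B S - (g B).toReal) with ⟨he, -⟩ | ⟨he, -⟩
          · left; simp only [Set.mem_setOf_eq]; linarith
          · right; simp only [Set.mem_setOf_eq]; linarith
        have hsum : ∀ (u : ℝ) (S : Fin n → X),
            ∑ i, u * (B.indicator (fun _ => (1:ℝ)) (S i) - (g B).toReal)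
            = u * ((n:ℝ) * (emp B S - (g B).toReal)) := by
          intro u S
          rw [← Finset.mul_sum, Finset.sum_sub_distrib, Finset.sum_const, Finset.card_univ,
            Fintype.card_fin, nsmul_eq_mul]
          congr 1
          rw [hempdef]
          field_simp
        have hexpeq : (n:ℝ) * (α/8) ^ 2 - (n:ℝ) * (α/8) * (α/4) = -((n:ℝ) * α ^ 2 / 64) := by
          ring
        have hup : (Measure.pi fun _ : Fin n => g) {S | α/4 ≤ emp B S - (g B).toReal} ≤ ebd := by
          have hsub2 : {S : Fin n → X | α/4 ≤ emp B S - (g B).toReal} ⊆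
              {S | (n:ℝ) * (α/8) * (α/4) ≤
                ∑ i, (α/8) * (B.indicator (fun _ => (1:ℝ)) (S i) - (g B).toReal)} := by
            intro S hS
            simp only [Set.mem_setOf_eq] at hS ⊢
            rw [hsum]
            have hh := mul_le_mul_of_nonneg_left hS (by positivity : (0:ℝ) ≤ α/8 * n)
            nlinarith [hh]
          calc (Measure.pi fun _ : Fin n => g) {S | α/4 ≤ emp B S - (g B).toReal}
              ≤ (Measure.pi fun _ : Fin n => g) {S | (n:ℝ) * (α/8) * (α/4) ≤
                ∑ i, (α/8) * (B.indicator (fun _ => (1:ℝ)) (S i) - (g B).toReal)} :=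
                measure_mono hsub2
            _ ≤ ENNReal.ofReal (Real.exp ((n:ℝ) * (α/8) ^ 2 - (n:ℝ) * (α/8) * (α/4))) :=
                chernoff_aux g hB n (α/8) _ (by rw [abs_of_pos (by linarith)]; linarith)
            _ = ebd := by rw [hebddef]; congr 1; ring
        have hdn : (Measure.pi fun _ : Fin n => g) {S | α/4 ≤ (g B).toReal - emp B S} ≤ ebd := by
          have hsub2 : {S : Fin n → X | α/4 ≤ (g B).toReal - emp B S} ⊆
              {S | (n:ℝ) * (α/8) * (α/4) ≤
                ∑ i, (-(α/8)) * (B.indicator (fun _ => (1:ℝ)) (S i) - (g B).toReal)} := by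
            intro S hS
            simp only [Set.mem_setOf_eq] at hS ⊢
            rw [hsum]
            have hh := mul_le_mul_of_nonneg_left hS (by positivity : (0:ℝ) ≤ α/8 * n)
            nlinarith [hh]
          calc (Measure.pi fun _ : Fin n => g) {S | α/4 ≤ (g B).toReal - emp B S}
              ≤ (Measure.pi fun _ : Fin n => g) {S | (n:ℝ) * (α/8) * (α/4) ≤
                ∑ i, (-(α/8)) * (B.indicator (fun _ => (1:ℝ)) (S i) - (g B).toReal)} :=
                measure_mono hsub2
            _ ≤ ENNReal.ofReal (Real.exp ((n:ℝ) * (-(α/8)) ^ 2 - (n:ℝ) * (α/8) * (α/4))) :=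
                chernoff_aux g hB n (-(α/8)) _ (by rw [abs_neg, abs_of_pos (by linarith)]; linarith)
            _ = ebd := by rw [hebddef]; congr 1; ring
        calc (Measure.pi fun _ : Fin n => g) {S | α/4 ≤ |emp B S - (g B).toReal|}
            ≤ (Measure.pi fun _ : Fin n => g) ({S | α/4 ≤ emp B S - (g B).toReal}
              ∪ {S | α/4 ≤ (g B).toReal - emp B S}) := measure_mono hsplit
          _ ≤ (Measure.pi fun _ : Fin n => g) {S | α/4 ≤ emp B S - (g B).toReal}
              + (Measure.pi fun _ : Fin n => g) {S | α/4 ≤ (g B).toReal - emp B S} :=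
              measure_union_le _ _
          _ ≤ ebd + ebd := add_le_add hup hdn
      -- bad event
      set Bad : Set (Fin n → X) := ⋃ pl : Fin N × Fin N,
        {S | α/4 ≤ |emp (A pl.1 pl.2) S - (g (A pl.1 pl.2)).toReal|} with hBaddef
      have hBadm : MeasurableSet Bad := by
        apply MeasurableSet.iUnion
        intro pl
        exact measurableSet_le measurable_const
          (((hempM _ (hAm pl.1 pl.2)).sub measurable_const).abs)
      have hBadle : (Measure.pi fun _ : Fin n => g) Bad ≤ ENNReal.ofReal β := by
        have h1 : (Measure.pi fun _ : Fin n => g) Bad ≤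
            ∑ pl : Fin N × Fin N, (ebd + ebd) := by
          refine (measure_iUnion_le _).trans ?_
          rw [tsum_fintype]
          exact Finset.sum_le_sum fun pl _ => htail _ (hAm pl.1 pl.2)
        have h2 : ∑ _pl : Fin N × Fin N, (ebd + ebd)
            = ENNReal.ofReal ((N * N : ℝ) * (2 * Real.exp (-((n:ℝ) * α ^ 2 / 64)))) := by
          rw [Finset.sum_const, Finset.card_univ]
          simp only [Fintype.card_prod, Fintype.card_fin]
          rw [nsmul_eq_mul, hebddef]
          rw [← ENNReal.ofReal_add (Real.exp_pos _).le (Real.exp_pos _).le]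
          rw [← ENNReal.ofReal_natCast (N * N), ← ENNReal.ofReal_mul (by positivity)]
          congr 1
          push_cast
          ring
        have hnum : (N * N : ℝ) * (2 * Real.exp (-((n:ℝ) * α ^ 2 / 64))) ≤ β := by
          have hineq : 200 * (Real.log N + Real.log (1 / β)) ≤ (n:ℝ) * α ^ 2 := by
            rw [div_le_iff₀ (by positivity)] at hn
            rw [hNdef] at hn
            linarith
          have hlogβ : Real.log (1 / β) = - Real.log β := by
            rw [one_div, Real.log_inv]
          have hNposR : (0:ℝ) < N := by linarith
          have hy : (0:ℝ) < β / (2 * ((N:ℝ) * N)) := by positivity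
          have harg : -((n:ℝ) * α ^ 2 / 64) ≤ Real.log (β / (2 * ((N:ℝ) * N))) := by
            rw [Real.log_div (by linarith) (by positivity), Real.log_mul (by norm_num)
              (by positivity), Real.log_mul (by positivity) (by positivity)]
            nlinarith
          have hexple : Real.exp (-((n:ℝ) * α ^ 2 / 64)) ≤ β / (2 * ((N:ℝ) * N)) := by
            calc Real.exp (-((n:ℝ) * α ^ 2 / 64))
                ≤ Real.exp (Real.log (β / (2 * ((N:ℝ) * N)))) := Real.exp_le_exp.2 harg
              _ = β / (2 * ((N:ℝ) * N)) := Real.exp_log hy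
          have hfin : (N * N : ℝ) * (2 * (β / (2 * ((N:ℝ) * N)))) = β := by
            field_simp
          nlinarith [Real.exp_pos (-((n:ℝ) * α ^ 2 / 64))]
        exact (h1.trans_eq h2).trans (ENNReal.ofReal_le_ofReal hnum)
      -- deterministic part
      have hdet : Badᶜ ⊆ {S | tvDist (κ (idx S)) g ≤ 3 * opt + α} := by
        intro S hS
        simp only [hBaddef, Set.mem_compl_iff, Set.mem_iUnion, not_exists,
          Set.mem_setOf_eq, not_le] at hS
        have hgood : ∀ k' l' : Fin N, |emp (A k' l') S - (g (A k' l')).toReal| ≤ α / 4 :=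
          fun k' l' => (hS (k', l')).le
        set k := idx S with hkdef
        have hDl : D l S ≤ tvDist (κ l) g + α / 4 := hDub l S g hg hgood
        have hDk : D k S ≤ D l S := hidx_min S l
        have hy := hAy k l
        have h1 : |((κ k) (A k l)).toReal - ((κ l) (A k l)).toReal| ≤ D k S + D l S := by
          have ha := hDle k S (k, l)
          have hb := hDle l S (k, l)
          rw [abs_sub_comm] at hb
          calc |((κ k) (A k l)).toReal - ((κ l) (A k l)).toReal|
              ≤ |((κ k) (A k l)).toReal - emp (A k l) S|
                + |emp (A k l) S - ((κ l) (A k l)).toReal| := abs_sub_le _ _ _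
            _ ≤ D k S + D l S := add_le_add ha hb
        have h2 : tvDist (κ k) g ≤ tvDist (κ k) (κ l) + tvDist (κ l) g :=
          tv_triangle (κ k) g (κ l)
        haveI : IsProbabilityMeasure (fs : Measure X) := hFprob _ fs.2
        have h3 : tvDist (κ l) g < opt + α / 8 := by
          rw [hκl, tv_comm]
          exact hfs
        simp only [Set.mem_setOf_eq]
        linarith
      -- conclusion
      have hfinal : ENNReal.ofReal (1 - β) ≤ (Measure.pi fun _ : Fin n => g) Badᶜ := by
        rw [prob_compl_eq_one_sub hBadm]
        calc ENNReal.ofReal (1 - β) = ENNReal.ofReal 1 - ENNReal.ofReal β :=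
              ENNReal.ofReal_sub 1 hβ0.le
          _ = 1 - ENNReal.ofReal β := by rw [ENNReal.ofReal_one]
          _ ≤ 1 - (Measure.pi fun _ : Fin n => g) Bad := tsub_le_tsub_left hBadle 1
      exact hfinal.trans (measure_mono hdet)
end

section
/- Let ε > 0, δ ∈ (0,1), Δ > 0, and set R = (Δ/ε)·log(1 + (e^ε − 1)/(2δ)). Let ν be the measure on ℝ with Lebesgue density f(x) = (ε/(2Δ(1 − e^{−εR/Δ})))·e^{−ε|x|/Δ} for x ∈ [−R, R] and f(x) = 0 for x ∉ [−R, R]. Then ν is a probability measure, and for every a ∈ ℝ with |a| ≤ Δ and every Borel set E ⊆ ℝ, both ν(E) ≤ e^ε·ν_a(E) + δ and ν_a(E) ≤ e^ε·ν(E) + δ hold, where ν_a denotes the pushforward of ν under the translation x ↦ x + a. -/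
open MeasureTheory

lemma expInt (k a b : ℝ) (hk : k ≠ 0) :
    ∫ x in a..b, Real.exp (k * x) = (Real.exp (k * b) - Real.exp (k * a)) / k := by
  have h : ∀ x ∈ Set.uIcc a b, HasDerivAt (fun y => Real.exp (k * y) / k)
      (Real.exp (k * x)) x := by
    intro x _
    have := ((hasDerivAt_id x).const_mul k).exp
    simpa [mul_comm, mul_div_assoc, mul_div_cancel_left₀ _ hk] using this.div_const k
  rw [intervalIntegral.integral_eq_sub_of_hasDerivAt h
    (by apply Continuous.intervalIntegrable; continuity)]
  ring

lemma algebra1 (ε Δ u : ℝ) (hε : ε ≠ 0) (hΔ : Δ ≠ 0) (hu : 1 - u ≠ 0) :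
    ε/(2*Δ*(1-u)) * ((1-u)/(ε/Δ)) + ε/(2*Δ*(1-u)) * ((u-1)/(-(ε/Δ))) = 1 := by
  field_simp
  ring

lemma algebra2 (ε Δ u : ℝ) (hε : ε ≠ 0) (hΔ : Δ ≠ 0) (hu : 1 - u ≠ 0) :
    (ε/(2*Δ*(1-u))) / (ε/Δ) = 1/(2*(1-u)) := by
  field_simp

set_option maxHeartbeats 1000000 in
theorem statement15 (ε δ Δ : ℝ) (hε : 0 < ε) (hδ : δ ∈ Set.Ioo (0 : ℝ) 1) (hΔ : 0 < Δ)
    (R : ℝ) (hR : R = Δ / ε * Real.log (1 + (Real.exp ε - 1) / (2 * δ)))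
    (f : ℝ → ℝ)
    (hf : f = fun x => if x ∈ Set.Icc (-R) R then
      ε / (2 * Δ * (1 - Real.exp (-ε * R / Δ))) * Real.exp (-ε * |x| / Δ) else 0)
    (ν : Measure ℝ) (hν : ν = volume.withDensity fun x => ENNReal.ofReal (f x)) :
    IsProbabilityMeasure ν ∧
    ∀ a : ℝ, |a| ≤ Δ → ∀ E : Set ℝ, MeasurableSet E →
      ν E ≤ ENNReal.ofReal (Real.exp ε) * (ν.map (fun x => x + a)) E + ENNReal.ofReal δ ∧
      (ν.map (fun x => x + a)) E ≤ ENNReal.ofReal (Real.exp ε) * ν E + ENNReal.ofReal δ := by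
  obtain ⟨hδ0, hδ1⟩ := hδ
  have hΔ' : Δ ≠ 0 := ne_of_gt hΔ
  have hε' : ε ≠ 0 := ne_of_gt hε
  obtain ⟨c, hcdef⟩ : ∃ c : ℝ, c = ε / Δ := ⟨_, rfl⟩
  have hc0 : 0 < c := by rw [hcdef]; exact div_pos hε hΔ
  have hc' : c ≠ 0 := ne_of_gt hc0
  have hcΔ : c * Δ = ε := by rw [hcdef]; field_simp
  have hexp1 : (1:ℝ) < Real.exp ε := by
    have := Real.add_one_le_exp ε; linarith
  have hA0 : (0:ℝ) < (Real.exp ε - 1) / (2 * δ) := by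
    apply div_pos <;> linarith
  have hexpR : Real.exp (c * R) = 1 + (Real.exp ε - 1) / (2 * δ) := by
    rw [hR, show c * (Δ / ε * Real.log (1 + (Real.exp ε - 1) / (2 * δ)))
        = Real.log (1 + (Real.exp ε - 1) / (2 * δ)) by rw [hcdef]; field_simp]
    exact Real.exp_log (by linarith)
  have hcR0 : 0 < c * R := by
    have h1 : Real.exp 0 < Real.exp (c * R) := by
      rw [Real.exp_zero, hexpR]; linarith
    exact Real.exp_lt_exp.mp h1
  have hR0 : 0 < R := by nlinarith
  obtain ⟨u, hudef⟩ : ∃ u : ℝ, u = Real.exp (-(c * R)) := ⟨_, rfl⟩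
  have hu0 : 0 < u := by rw [hudef]; exact Real.exp_pos _
  have hu1 : u < 1 := by
    rw [hudef]; exact Real.exp_lt_one_iff.mpr (by linarith)
  have h1u : 0 < 1 - u := by linarith
  have huA : u * (1 + (Real.exp ε - 1) / (2 * δ)) = 1 := by
    rw [hudef, ← hexpR, ← Real.exp_add]; simp
  have hu2δ : u * (2 * δ + (Real.exp ε - 1)) = 2 * δ := by
    have h2 : 2 * δ * (1 + (Real.exp ε - 1) / (2 * δ)) = 2 * δ + (Real.exp ε - 1) := by
      field_simp
    nlinarith [huA]
  obtain ⟨C, hCdef⟩ : ∃ C : ℝ, C = ε / (2 * Δ * (1 - u)) := ⟨_, rfl⟩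
  have hC0 : 0 < C := by
    rw [hCdef]; apply div_pos hε; positivity
  obtain ⟨g, hgdef⟩ : ∃ g : ℝ → ℝ, g = fun x => C * Real.exp (-(c * |x|)) := ⟨_, rfl⟩
  have hgval : ∀ x, g x = C * Real.exp (-(c * |x|)) := by
    intro x; rw [hgdef]
  have hfg : f = (Set.Icc (-R) R).indicator g := by
    funext x
    have e1 : -ε * R / Δ = -(c * R) := by rw [hcdef]; ring
    have e2 : -ε * |x| / Δ = -(c * |x|) := by rw [hcdef]; ring
    simp only [hf, Set.indicator_apply, hgdef, e1, e2]
    rw [← hudef, ← hCdef]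
  have hgc : Continuous g := by
    rw [hgdef]
    exact continuous_const.mul
      (Real.continuous_exp.comp (continuous_const.mul continuous_abs).neg)
  have hfm : Measurable f := by
    rw [hfg]; exact hgc.measurable.indicator measurableSet_Icc
  have hfi : Integrable f := by
    rw [hfg]
    exact (hgc.integrableOn_Icc).integrable_indicator measurableSet_Icc
  have hgnn : ∀ x, 0 ≤ g x := by
    intro x; rw [hgval]; positivity
  have hfnn : ∀ x, 0 ≤ f x := by
    intro x; rw [hfg]; exact Set.indicator_nonneg (fun y _ => hgnn y) x
  have hfval : ∀ x, x ∈ Set.Icc (-R) R → f x = C * Real.exp (-(c * |x|)) := by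
    intro x hx; rw [hfg, Set.indicator_of_mem hx, hgval]
  have hfzero : ∀ x, x ∉ Set.Icc (-R) R → f x = 0 := by
    intro x hx; rw [hfg, Set.indicator_of_notMem hx]
  -- total integral is 1
  have hI : ∫ x, f x = 1 := by
    rw [hfg, integral_indicator measurableSet_Icc, integral_Icc_eq_integral_Ioc,
      ← intervalIntegral.integral_of_le (by linarith : -R ≤ R)]
    have int1 : IntervalIntegrable g volume (-R) 0 := hgc.intervalIntegrable _ _
    have int2 : IntervalIntegrable g volume 0 R := hgc.intervalIntegrable _ _
    rw [← intervalIntegral.integral_add_adjacent_intervals int1 int2]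
    have e1 : ∫ x in (-R)..(0:ℝ), g x = ∫ x in (-R)..(0:ℝ), C * Real.exp (c * x) := by
      apply intervalIntegral.integral_congr
      intro x hx
      rw [Set.uIcc_of_le (by linarith : -R ≤ (0:ℝ))] at hx
      rw [hgval, abs_of_nonpos hx.2]
      ring_nf
    have e2 : ∫ x in (0:ℝ)..R, g x = ∫ x in (0:ℝ)..R, C * Real.exp (-c * x) := by
      apply intervalIntegral.integral_congr
      intro x hx
      rw [Set.uIcc_of_le (by linarith : (0:ℝ) ≤ R)] at hx
      rw [hgval, abs_of_nonneg hx.1]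
      ring_nf
    rw [e1, e2, intervalIntegral.integral_const_mul, intervalIntegral.integral_const_mul,
      expInt c _ _ hc', expInt (-c) _ _ (by simpa using hc')]
    rw [show c * (0:ℝ) = 0 by ring, show (-c) * (0:ℝ) = 0 by ring,
      show c * (-R) = -(c * R) by ring, show (-c) * R = -(c * R) by ring,
      Real.exp_zero, ← hudef, hCdef, hcdef]
    exact algebra1 ε Δ u hε' hΔ' (ne_of_gt h1u)
  have hν_univ : ν Set.univ = 1 := by
    rw [hν, withDensity_apply _ MeasurableSet.univ, Measure.restrict_univ,
      ← ofReal_integral_eq_lintegral_ofReal hfi (Filter.Eventually.of_forall hfnn),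
      hI, ENNReal.ofReal_one]
  -- formula for ν E
  have hνE : ∀ E : Set ℝ, MeasurableSet E →
      ν E = ∫⁻ x, E.indicator (fun y => ENNReal.ofReal (f y)) x := by
    intro E hE
    rw [hν, withDensity_apply _ hE, ← lintegral_indicator hE]
  -- formula for the mapped measure
  have hmap : ∀ a : ℝ, ∀ E : Set ℝ, MeasurableSet E →
      (ν.map (fun x => x + a)) E
        = ∫⁻ x, E.indicator (fun y => ENNReal.ofReal (f (y - a))) x := by
    intro a E hE
    have hpre : MeasurableSet ((fun x => x + a) ⁻¹' E) := hE.preimage (measurable_add_const a)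
    rw [Measure.map_apply (measurable_add_const a) hE, hν, withDensity_apply _ hpre,
      ← lintegral_indicator hpre]
    rw [← lintegral_add_right_eq_self
      (fun x => E.indicator (fun y => ENNReal.ofReal (f (y - a))) x) a]
    congr 1
    funext x
    by_cases hx : x + a ∈ E
    · rw [Set.indicator_of_mem hx, Set.indicator_of_mem (by exact hx), add_sub_cancel_right]
    · rw [Set.indicator_of_notMem hx, Set.indicator_of_notMem (by exact hx)]
  -- the tail bound
  have hCc : C / c = 1 / (2 * (1 - u)) := by
    rw [hCdef, hcdef]
    exact algebra2 ε Δ u hε' hΔ' (ne_of_gt h1u)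
  have tailbound : ∀ b : ℝ, 0 ≤ b → b ≤ Δ →
      C * ((Real.exp (c * (b - R)) - Real.exp (c * (-R))) / c) ≤ δ := by
    intro b hb0 hbΔ
    have e1 : Real.exp (c * (b - R)) = Real.exp (c * b) * u := by
      rw [hudef, ← Real.exp_add]; ring_nf
    have e2 : Real.exp (c * (-R)) = u := by rw [hudef]; ring_nf
    have e3 : Real.exp (c * b) ≤ Real.exp ε := by
      apply Real.exp_le_exp.mpr
      calc c * b ≤ c * Δ := mul_le_mul_of_nonneg_left hbΔ hc0.le
        _ = ε := hcΔ
    have key : C * ((Real.exp (c * b) * u - u) / c) ≤ δ := by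
      have h4 : C * ((Real.exp (c * b) * u - u) / c)
          = (C / c) * (u * (Real.exp (c * b) - 1)) := by ring
      rw [h4, hCc]
      have h5 : u * (Real.exp (c * b) - 1) ≤ u * (Real.exp ε - 1) :=
        mul_le_mul_of_nonneg_left (by linarith) hu0.le
      have h6 : u * (Real.exp ε - 1) = 2 * δ * (1 - u) := by linear_combination hu2δ
      have h7 : (1 / (2 * (1 - u))) * (u * (Real.exp (c * b) - 1))
          ≤ (1 / (2 * (1 - u))) * (2 * δ * (1 - u)) :=
        mul_le_mul_of_nonneg_left (h5.trans h6.le) (by positivity)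
      have h8 : (1 / (2 * (1 - u))) * (2 * δ * (1 - u)) = δ := by
        field_simp
      linarith
    calc C * ((Real.exp (c * (b - R)) - Real.exp (c * (-R))) / c)
        = C * ((Real.exp (c * b) * u - u) / c) := by rw [e1, e2]
      _ ≤ δ := key
  -- one-sided key inequality
  have key : ∀ a : ℝ, |a| ≤ Δ → ∀ E : Set ℝ, MeasurableSet E →
      ν E ≤ ENNReal.ofReal (Real.exp ε) * (ν.map (fun x => x + a)) E + ENNReal.ofReal δ := by
    intro a ha E hE
    have haΔ : -Δ ≤ a ∧ a ≤ Δ := abs_le.mp ha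
    obtain ⟨T, hT⟩ : ∃ T : Set ℝ,
        T = if 0 ≤ a then Set.Icc (-R) (-R + a) else Set.Icc (R + a) R := ⟨_, rfl⟩
    have hTm : MeasurableSet T := by
      rw [hT]; split_ifs
      · exact measurableSet_Icc
      · exact measurableSet_Icc
    -- pointwise inequality
    have hpt : ∀ x, f x ≤ Real.exp ε * f (x - a) + T.indicator f x := by
      intro x
      have hTnn : 0 ≤ T.indicator f x := Set.indicator_nonneg (fun y _ => hfnn y) x
      by_cases hx : x ∈ Set.Icc (-R) R
      · by_cases hy : x - a ∈ Set.Icc (-R) R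
        · have h1 : f x = C * Real.exp (-(c * |x|)) := hfval x hx
          have h2 : f (x - a) = C * Real.exp (-(c * |x - a|)) := hfval _ hy
          have habs : |x - a| ≤ |x| + Δ := by
            calc |x - a| ≤ |x| + |a| := abs_sub _ _
              _ ≤ |x| + Δ := by linarith
          have hle : c * |x - a| ≤ c * |x| + ε := by
            have h9 := mul_le_mul_of_nonneg_left habs hc0.le
            rw [mul_add, hcΔ] at h9
            exact h9
          have h3 : Real.exp (-(c * |x|)) ≤ Real.exp ε * Real.exp (-(c * |x - a|)) := by
            rw [← Real.exp_add]
            exact Real.exp_le_exp.mpr (by linarith)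
          have h4 : f x ≤ Real.exp ε * f (x - a) := by
            rw [h1, h2]
            calc C * Real.exp (-(c * |x|))
                ≤ C * (Real.exp ε * Real.exp (-(c * |x - a|))) :=
                  mul_le_mul_of_nonneg_left h3 hC0.le
              _ = Real.exp ε * (C * Real.exp (-(c * |x - a|))) := by ring
          linarith
        · have hxT : x ∈ T := by
            rw [hT]
            simp only [Set.mem_Icc, not_and, not_le] at hy
            obtain ⟨hx1, hx2⟩ := hx
            split_ifs with ha0
            · refine ⟨hx1, ?_⟩
              by_cases h5 : -R ≤ x - a
              · exfalso; have := hy h5; linarith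
              · push_neg at h5; linarith
            · push_neg at ha0
              refine ⟨?_, hx2⟩
              by_cases h5 : -R ≤ x - a
              · have := hy h5; linarith
              · exfalso; push_neg at h5; linarith
          rw [hfzero _ hy, Set.indicator_of_mem hxT, mul_zero, zero_add]
      · rw [hfzero _ hx]
        have h10 : 0 ≤ Real.exp ε * f (x - a) :=
          mul_nonneg (Real.exp_pos ε).le (hfnn _)
        linarith
    -- tail integral bound
    have hTint : ∫ x in T, f x ≤ δ := by
      rw [hT]
      split_ifs with ha0
      · -- a ≥ 0 : tail Icc (-R) (-R + a), bound f by C exp (c x)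
        have hmono : ∀ x, f x ≤ C * Real.exp (c * x) := by
          intro x
          by_cases hx : x ∈ Set.Icc (-R) R
          · rw [hfval x hx]
            have h9 : -(c * |x|) ≤ c * x := by
              rw [neg_mul_eq_mul_neg]
              exact mul_le_mul_of_nonneg_left (neg_abs_le x) hc0.le
            exact mul_le_mul_of_nonneg_left (Real.exp_le_exp.mpr h9) hC0.le
          · rw [hfzero _ hx]; positivity
        have hcont : Continuous fun x : ℝ => C * Real.exp (c * x) :=
          continuous_const.mul (Real.continuous_exp.comp (continuous_const.mul continuous_id))
        have h6 : ∫ x in Set.Icc (-R) (-R + a), f x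
            ≤ ∫ x in Set.Icc (-R) (-R + a), C * Real.exp (c * x) :=
          setIntegral_mono (hfi.integrableOn) (hcont.integrableOn_Icc) hmono
        have h7 : ∫ x in Set.Icc (-R) (-R + a), C * Real.exp (c * x)
            = C * ((Real.exp (c * (a - R)) - Real.exp (c * (-R))) / c) := by
          rw [integral_Icc_eq_integral_Ioc,
            ← intervalIntegral.integral_of_le (by linarith : -R ≤ -R + a),
            intervalIntegral.integral_const_mul, expInt c _ _ hc',
            show c * (-R + a) = c * (a - R) by ring]
        have h8 := tailbound a ha0 haΔ.2
        linarith
      · -- a < 0 : tail Icc (R + a) R, bound f by C exp (-c x)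
        push_neg at ha0
        have hmono : ∀ x, f x ≤ C * Real.exp (-c * x) := by
          intro x
          by_cases hx : x ∈ Set.Icc (-R) R
          · rw [hfval x hx]
            have h9 : -(c * |x|) ≤ -c * x := by
              rw [neg_mul_eq_mul_neg, neg_mul_comm]
              exact mul_le_mul_of_nonneg_left (neg_le_neg (le_abs_self x)) hc0.le
            exact mul_le_mul_of_nonneg_left (Real.exp_le_exp.mpr h9) hC0.le
          · rw [hfzero _ hx]; positivity
        have hcont : Continuous fun x : ℝ => C * Real.exp (-c * x) :=
          continuous_const.mul (Real.continuous_exp.comp (continuous_const.mul continuous_id))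
        have h6 : ∫ x in Set.Icc (R + a) R, f x
            ≤ ∫ x in Set.Icc (R + a) R, C * Real.exp (-c * x) :=
          setIntegral_mono (hfi.integrableOn) (hcont.integrableOn_Icc) hmono
        have h7 : ∫ x in Set.Icc (R + a) R, C * Real.exp (-c * x)
            = C * ((Real.exp (c * (-a - R)) - Real.exp (c * (-R))) / c) := by
          rw [integral_Icc_eq_integral_Ioc,
            ← intervalIntegral.integral_of_le (by linarith : R + a ≤ R),
            intervalIntegral.integral_const_mul, expInt (-c) _ _ (by simpa using hc'),
            show -c * R = c * (-R) by ring, show -c * (R + a) = c * (-a - R) by ring]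
          field_simp [hc']
          ring
        have h8 := tailbound (-a) (by linarith) (by linarith [haΔ.1])
        linarith
    -- assemble
    have hmeas1 : Measurable fun x : ℝ => ENNReal.ofReal (f (x - a)) :=
      (hfm.comp (measurable_sub_const a)).ennreal_ofReal
    have hptE : ∀ x, E.indicator (fun y => ENNReal.ofReal (f y)) x
        ≤ ENNReal.ofReal (Real.exp ε) * E.indicator (fun y => ENNReal.ofReal (f (y - a))) x
          + ENNReal.ofReal (T.indicator f x) := by
      intro x
      by_cases hx : x ∈ E
      · rw [Set.indicator_of_mem hx, Set.indicator_of_mem hx,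
          ← ENNReal.ofReal_mul (Real.exp_pos ε).le,
          ← ENNReal.ofReal_add (mul_nonneg (Real.exp_pos ε).le (hfnn _))
            (Set.indicator_nonneg (fun y _ => hfnn y) x)]
        exact ENNReal.ofReal_le_ofReal (hpt x)
      · rw [Set.indicator_of_notMem hx, Set.indicator_of_notMem hx]
        exact zero_le
    have hstep : ν E ≤ ∫⁻ x, (ENNReal.ofReal (Real.exp ε)
        * E.indicator (fun y => ENNReal.ofReal (f (y - a))) x
        + ENNReal.ofReal (T.indicator f x)) := by
      rw [hνE E hE]; exact lintegral_mono hptE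
    rw [lintegral_add_left ((hmeas1.indicator hE).const_mul _),
      lintegral_const_mul _ (hmeas1.indicator hE)] at hstep
    have htail : ∫⁻ x, ENNReal.ofReal (T.indicator f x) ≤ ENNReal.ofReal δ := by
      rw [← ofReal_integral_eq_lintegral_ofReal (hfi.indicator hTm)
        (Filter.Eventually.of_forall (fun x => Set.indicator_nonneg (fun y _ => hfnn y) x))]
      apply ENNReal.ofReal_le_ofReal
      rw [integral_indicator hTm]
      exact hTint
    calc ν E ≤ _ := hstep
      _ ≤ ENNReal.ofReal (Real.exp ε) * (ν.map (fun x => x + a)) E + ENNReal.ofReal δ := by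
          rw [hmap a E hE]
          exact add_le_add le_rfl htail
  refine ⟨⟨hν_univ⟩, fun a ha E hE => ⟨key a ha E hE, ?_⟩⟩
  have hpre : MeasurableSet ((fun x => x + a) ⁻¹' E) := hE.preimage (measurable_add_const a)
  have h1 := key (-a) (by rwa [abs_neg]) _ hpre
  have h2 : (ν.map (fun x => x + -a)) ((fun x => x + a) ⁻¹' E) = ν E := by
    rw [Measure.map_apply (measurable_add_const (-a)) hpre]
    congr 1
    ext x
    simp
  rw [Measure.map_apply (measurable_add_const a) hE]
  rw [h2] at h1
  exact h1
end
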